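/- Let H be a Hilbert space, I = [T₀,T], and suppose x₁, x₂ : I → H are absolutely continuous with D(t) := ‖x₁(t) − x₂(t)‖ satisfying, for a.e. t ∈ I, (d/dt)(D(t)²) ≤ 2(L₁(t) + φ(t)/r)·D(t)² + 2‖Z(t)‖·D(t) + 2L₂(t)·D(t)·∫_{T₀}^t D(s) ds, where L₁, L₂, φ ∈ L¹(I,ℝ₊), r > 0, and Z ∈ L¹(I,H). Then for all t ∈ I, ‖x₁(t) − x₂(t)‖ ≤ exp(∫_{T₀}^T (K(τ)+1) dτ)·(‖x₁(T₀) − x₂(T₀)‖ + ∫_{T₀}^t ‖Z(s)‖ ds), where K(t) := max{L₁(t) + φ(t)/r, L₂(t)}. -/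

import Mathlib

set_option maxHeartbeats 1000000
open MeasureTheory intervalIntegral Real

lemma exists_partition (a b : ℝ) (hab : a ≤ b) (Γ : ℝ → ℝ)
    (hcont : ContinuousOn Γ (Set.Icc a b)) (hmono : MonotoneOn Γ (Set.Icc a b))
    (n : ℕ) (hn : 0 < n) :
    ∃ p : ℕ → ℝ, Monotone p ∧ p 0 = a ∧ (∀ j, n ≤ j → p j = b) ∧
      (∀ j, p j ∈ Set.Icc a b) ∧
      ∀ j, Γ (p (j + 1)) - Γ (p j) ≤ (Γ b - Γ a) / n := by
  have hmem_a : a ∈ Set.Icc a b := ⟨le_rfl, hab⟩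
  have hmem_b : b ∈ Set.Icc a b := ⟨hab, le_rfl⟩
  have hΓab : Γ a ≤ Γ b := hmono hmem_a hmem_b hab
  set Δ : ℝ := (Γ b - Γ a) / n with hΔ
  have hnR : (0:ℝ) < n := by positivity
  have hΔ0 : 0 ≤ Δ := div_nonneg (by linarith) hnR.le
  have hbn : Γ a + n * Δ = Γ b := by rw [hΔ, mul_div_cancel₀ _ hnR.ne']; ring
  rcases eq_or_lt_of_le hΔ0 with hΔeq | hΔpos
  · -- Δ = 0, so Γ b = Γ a
    have hba : Γ b = Γ a := by nlinarith [hbn]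
    refine ⟨fun j => if n ≤ j then b else a, ?_, ?_, ?_, ?_, ?_⟩
    · apply monotone_nat_of_le_succ
      intro j
      by_cases h : n ≤ j
      · simp [h, h.trans (Nat.le_succ j)]
      · by_cases h' : n ≤ j + 1 <;> simp [h, h', hab]
    · have : ¬ (n ≤ 0) := by omega
      simp [this]
    · intro j hj; simp [hj]
    · intro j; by_cases h : n ≤ j <;> simp [h, hmem_a, hmem_b]
    · intro j
      by_cases h : n ≤ j
      · simp [h, h.trans (Nat.le_succ j)]; linarith
      · by_cases h' : n ≤ j + 1 <;> simp [h, h'] <;> linarith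
  · -- Δ > 0
    have hcap : ∀ j : ℕ, j ≤ n → Γ a + j * Δ ≤ Γ b := by
      intro j hj
      have : (j:ℝ) ≤ n := Nat.cast_le.mpr hj
      nlinarith
    have hIVT : ∀ j : ℕ, j ≤ n → ∃ x ∈ Set.Icc a b, Γ x = Γ a + j * Δ := by
      intro j hj
      have hmem : Γ a + j * Δ ∈ Set.Icc (Γ a) (Γ b) :=
        ⟨by nlinarith [Nat.cast_nonneg (α := ℝ) j], hcap j hj⟩
      exact intermediate_value_Icc hab hcont hmem
    choose! x hxmem hxval using hIVT
    set p : ℕ → ℝ := fun j => if j = 0 then a else if n ≤ j then b else x j with hp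
    have hple : ∀ j, j ≤ n → Γ (p j) = Γ a + j * Δ := by
      intro j hj
      by_cases h0 : j = 0
      · subst h0; simp [hp]
      · by_cases h : n ≤ j
        · have : j = n := le_antisymm hj h
          subst this
          simp [hp, h0, h, ← hbn]
        · simp [hp, h0, h, hxval j hj]
    have hpmem : ∀ j, p j ∈ Set.Icc a b := by
      intro j
      by_cases h0 : j = 0
      · subst h0; simpa [hp] using hmem_a
      · by_cases h : n ≤ j
        · simp [hp, h0, h, hmem_b]
        · exact le_of_lt (lt_of_not_ge h) |> fun hjn => by
            simp [hp, h0, h, hxmem j (by omega)]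
    have hstep : ∀ j, p j ≤ p (j + 1) := by
      intro j
      by_cases h0 : j = 0
      · subst h0
        have h1 : p 0 = a := by simp [hp]
        rw [h1]
        exact (hpmem 1).1
      · by_cases h : n ≤ j
        · have h' : n ≤ j + 1 := h.trans (Nat.le_succ j)
          simp [hp, h0, h, h']
        · by_cases h' : n ≤ j + 1
          · simpa [hp, h0, h, h'] using (hpmem j).2
          · -- j, j+1 < n : compare via Γ values
            by_contra hcon
            push_neg at hcon
            have h1 : Γ (p (j + 1)) ≤ Γ (p j) := hmono (hpmem (j + 1)) (hpmem j) hcon.le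
            rw [hple j (by omega), hple (j+1) (by omega)] at h1
            push_cast at h1
            nlinarith
    exact ⟨fun j => p j, monotone_nat_of_le_succ hstep, by simp [hp],
      fun j hj => by simp [hp, hj, Nat.pos_iff_ne_zero.mp (hn.trans_le hj)], hpmem, by
        intro j
        by_cases h : n ≤ j
        · have h' : n ≤ j + 1 := h.trans (Nat.le_succ j)
          simp [hp, h, h', Nat.pos_iff_ne_zero.mp (hn.trans_le h),
            Nat.pos_iff_ne_zero.mp (hn.trans_le h')]
          linarith
        · by_cases h' : n ≤ j + 1
          · have : j + 1 = n := by omega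
            rw [hple j (by omega)]
            have : Γ (p (j+1)) = Γ a + (j+1 : ℕ) * Δ := by
              rw [hple (j+1) (by omega)]
            rw [this]; push_cast; linarith
          · rw [hple j (by omega), hple (j+1) (by omega)]; push_cast; linarith⟩


lemma my_II {f : ℝ → ℝ} {T₀ T s t : ℝ} (hint : IntegrableOn f (Set.Icc T₀ T))
    (hs : s ∈ Set.Icc T₀ T) (ht : t ∈ Set.Icc T₀ T) (hst : s ≤ t) :
    IntervalIntegrable f volume s t := by
  rw [intervalIntegrable_iff_integrableOn_Icc_of_le hst]
  exact hint.mono_set (Set.Icc_subset_Icc hs.1 ht.2)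

lemma gronwall_int (T₀ T : ℝ) (hT : T₀ ≤ T) (W a β : ℝ → ℝ)
    (hW : ContinuousOn W (Set.Icc T₀ T)) (hW0 : ∀ τ ∈ Set.Icc T₀ T, 0 ≤ W τ)
    (ha0 : ∀ τ ∈ Set.Icc T₀ T, 0 ≤ a τ) (hamono : MonotoneOn a (Set.Icc T₀ T))
    (hβ0 : ∀ τ, 0 ≤ β τ) (hβint : IntegrableOn β (Set.Icc T₀ T))
    (hmain : ∀ t ∈ Set.Icc T₀ T, W t ≤ a t + ∫ τ in T₀..t, β τ * W τ) :
    ∀ t ∈ Set.Icc T₀ T, W t ≤ a t * Real.exp (∫ τ in T₀..T, β τ) := by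
  intro t ht
  -- integrability of β * W
  obtain ⟨C, hC⟩ := isCompact_Icc.exists_bound_of_continuousOn hW
  have hWmeas : AEStronglyMeasurable W (volume.restrict (Set.Icc T₀ T)) :=
    hW.aestronglyMeasurable measurableSet_Icc
  have hβWint : IntegrableOn (fun τ => β τ * W τ) (Set.Icc T₀ T) := by
    have : IntegrableOn (fun τ => W τ * β τ) (Set.Icc T₀ T) :=
      Integrable.bdd_mul hβint hWmeas
        ((ae_restrict_iff' measurableSet_Icc).mpr (ae_of_all _ fun τ hτ => hC τ hτ))
    simpa [mul_comm] using this
  set Y : ℝ → ℝ := fun s => ∫ τ in T₀..s, β τ * W τ with hY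
  set Q : ℝ → ℝ := fun s => ∫ τ in T₀..s, β τ with hQdef
  have hQT₀ : Q T₀ = 0 := integral_same
  have hYT₀ : Y T₀ = 0 := integral_same
  have hQadd : ∀ s ∈ Set.Icc T₀ T, ∀ u ∈ Set.Icc T₀ T, s ≤ u →
      Q u - Q s = ∫ τ in s..u, β τ := by
    intro s hs u hu hsu
    have := integral_add_adjacent_intervals (my_II hβint ⟨le_rfl, hT⟩ hs hs.1)
      (my_II hβint hs hu hsu)
    simp only [hQdef]
    linarith [this]
  have hYadd : ∀ s ∈ Set.Icc T₀ T, ∀ u ∈ Set.Icc T₀ T, s ≤ u →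
      Y u - Y s = ∫ τ in s..u, β τ * W τ := by
    intro s hs u hu hsu
    have := integral_add_adjacent_intervals (my_II hβWint ⟨le_rfl, hT⟩ hs hs.1)
      (my_II hβWint hs hu hsu)
    simp only [hY]
    linarith [this]
  have hQmono : MonotoneOn Q (Set.Icc T₀ T) := by
    intro s hs u hu hsu
    have h := hQadd s hs u hu hsu
    have : (0:ℝ) ≤ ∫ τ in s..u, β τ :=
      integral_nonneg hsu (fun τ _ => hβ0 τ)
    linarith
  have hQcont : ContinuousOn Q (Set.Icc T₀ T) := by
    have := continuousOn_primitive_interval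
      (a := T₀) (b := T) (f := β) (μ := volume) (by rwa [Set.uIcc_of_le hT])
    rwa [Set.uIcc_of_le hT] at this
  have hYmono : MonotoneOn Y (Set.Icc T₀ T) := by
    intro s hs u hu hsu
    have h := hYadd s hs u hu hsu
    have : (0:ℝ) ≤ ∫ τ in s..u, β τ * W τ :=
      integral_nonneg hsu (fun τ hτ =>
        mul_nonneg (hβ0 τ) (hW0 τ (Set.Icc_subset_Icc hs.1 hu.2 hτ)))
    linarith
  have hY0 : ∀ s ∈ Set.Icc T₀ T, 0 ≤ Y s := by
    intro s hs
    have := hYmono ⟨le_rfl, hT⟩ hs hs.1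
    rw [hYT₀] at this; exact this
  set k : ℝ := Q T with hk
  have hk0 : 0 ≤ k := by
    have := hQmono ⟨le_rfl, hT⟩ ⟨hT, le_rfl⟩ hT
    rw [hQT₀] at this; exact this
  -- per-m bound
  have perm : ∀ m : ℕ, 0 < m → k < m →
      W t ≤ a t * ((1 - k / m)⁻¹) ^ (m + 2) := by
    intro m hm hkm
    have hmR : (0:ℝ) < m := by positivity
    set q : ℝ := (Q T - Q T₀) / m with hq
    have hqk : q = k / m := by rw [hq, hQT₀, hk]; ring
    have hq0 : 0 ≤ q := by rw [hqk]; positivity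
    have hq1 : q < 1 := by rw [hqk]; rw [div_lt_one hmR]; exact hkm
    have h1q : 0 < 1 - q := by linarith
    obtain ⟨p, hpmono, hp0, hpT, hpmem, hpinc⟩ :=
      exists_partition T₀ T hT Q hQcont hQmono m hm
    set R : ℝ := (1 - q)⁻¹ with hR
    have hR1 : 1 ≤ R := by
      rw [hR, le_inv_comm₀] <;> linarith
    -- piece bound
    have hpiece : ∀ s ∈ Set.Icc T₀ T, ∀ u ∈ Set.Icc T₀ T, s ≤ u →
        Q u - Q s ≤ q → ∀ σ ∈ Set.Icc s u, W σ ≤ (a u + Y s) / (1 - q) := by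
      intro s hs u hu hsu hQq σ hσ
      obtain ⟨σm, hσm, hmax⟩ := isCompact_Icc.exists_isMaxOn ⟨s, le_rfl, hsu⟩
        (hW.mono (Set.Icc_subset_Icc hs.1 hu.2))
      have hσmI : σm ∈ Set.Icc T₀ T := Set.Icc_subset_Icc hs.1 hu.2 hσm
      have hWσm : W σ ≤ W σm := hmax hσ
      have h1 : W σm ≤ a σm + Y σm := hmain σm hσmI
      have h2 : Y σm - Y s = ∫ τ in s..σm, β τ * W τ := hYadd s hs σm hσmI hσm.1
      have h3 : (∫ τ in s..σm, β τ * W τ) ≤ ∫ τ in s..σm, β τ * W σm := by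
        apply integral_mono_on hσm.1
          (my_II hβWint hs hσmI hσm.1)
          ((my_II hβint hs hσmI hσm.1).mul_const _)
        intro τ hτ
        exact mul_le_mul_of_nonneg_left
          (hmax (Set.Icc_subset_Icc le_rfl hσm.2 hτ)) (hβ0 τ)
      have h4 : (∫ τ in s..σm, β τ * W σm) = (Q σm - Q s) * W σm := by
        rw [intervalIntegral.integral_mul_const, hQadd s hs σm hσmI hσm.1]
      have h5 : Q σm - Q s ≤ q := by
        have := hQmono hσmI hu hσm.2
        linarith
      have hWσm0 : 0 ≤ W σm := hW0 σm hσmI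
      have h6 : (Q σm - Q s) * W σm ≤ q * W σm :=
        mul_le_mul_of_nonneg_right h5 hWσm0
      have h7 : a σm ≤ a u := hamono hσmI hu hσm.2
      have h8 : W σm * (1 - q) ≤ a u + Y s := by nlinarith
      calc W σ ≤ W σm := hWσm
        _ ≤ (a u + Y s) / (1 - q) := by
            rw [le_div_iff₀ h1q]; linarith
    -- Y induction
    have hYind : ∀ j : ℕ, Y (p j) ≤ a (p j) * (R ^ j - 1) := by
      intro j
      induction j with
      | zero => rw [hp0, hYT₀]; simp
      | succ j ih =>
        have hpj := hpmem j
        have hpj1 := hpmem (j + 1)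
        have hle : p j ≤ p (j + 1) := hpmono (Nat.le_succ j)
        have hinc : Q (p (j+1)) - Q (p j) ≤ q := hpinc j
        have hYd : Y (p (j+1)) - Y (p j) = ∫ τ in p j..p (j+1), β τ * W τ :=
          hYadd _ hpj _ hpj1 hle
        have hB0 : 0 ≤ (a (p (j+1)) + Y (p j)) / (1 - q) := by
          apply div_nonneg _ h1q.le
          exact add_nonneg (ha0 _ hpj1) (hY0 _ hpj)
        have h3 : (∫ τ in p j..p (j+1), β τ * W τ) ≤
            ∫ τ in p j..p (j+1), β τ * ((a (p (j+1)) + Y (p j)) / (1 - q)) := by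
          apply integral_mono_on hle (my_II hβWint hpj hpj1 hle)
            ((my_II hβint hpj hpj1 hle).mul_const _)
          intro τ hτ
          exact mul_le_mul_of_nonneg_left
            (hpiece _ hpj _ hpj1 hle hinc τ hτ) (hβ0 τ)
        have h4 : (∫ τ in p j..p (j+1), β τ * ((a (p (j+1)) + Y (p j)) / (1 - q)))
            = (Q (p (j+1)) - Q (p j)) * ((a (p (j+1)) + Y (p j)) / (1 - q)) := by
          rw [intervalIntegral.integral_mul_const, hQadd _ hpj _ hpj1 hle]
        have h5 : (Q (p (j+1)) - Q (p j)) * ((a (p (j+1)) + Y (p j)) / (1 - q))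
            ≤ q * ((a (p (j+1)) + Y (p j)) / (1 - q)) :=
          mul_le_mul_of_nonneg_right hinc hB0
        have haj : a (p j) ≤ a (p (j+1)) := hamono hpj hpj1 hle
        have hRj1 : 1 ≤ R ^ j := one_le_pow₀ hR1
        have hRq : R * (1 - q) = 1 := by
          rw [hR]; field_simp
        have ihj : Y (p j) ≤ a (p (j+1)) * (R ^ j - 1) := by
          have h0 : 0 ≤ R ^ j - 1 := by linarith
          have := mul_le_mul_of_nonneg_right haj h0
          linarith
        -- combine
        have : Y (p (j+1)) ≤ Y (p j) + q * ((a (p (j+1)) + Y (p j)) / (1 - q)) := by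
          linarith
        have expand : Y (p j) + q * ((a (p (j+1)) + Y (p j)) / (1 - q))
            ≤ a (p (j+1)) * (R ^ (j+1) - 1) := by
          rw [div_eq_mul_inv, ← hR]
          have ha1 : 0 ≤ a (p (j+1)) := ha0 _ hpj1
          have hqR : q * R = R - 1 := by
            rw [hR]; field_simp; ring
          have hR0 : (0:ℝ) ≤ R := by linarith
          have h7 : q * ((a (p (j+1)) + Y (p j)) * R)
              = (R - 1) * (a (p (j+1)) + Y (p j)) := by
            rw [show q * ((a (p (j+1)) + Y (p j)) * R)
              = (q * R) * (a (p (j+1)) + Y (p j)) from by ring, hqR]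
          have h8 : R * Y (p j) ≤ a (p (j+1)) * R ^ (j+1) - a (p (j+1)) * R := by
            have h9 := mul_le_mul_of_nonneg_left ihj hR0
            have h10 : R * (a (p (j+1)) * (R ^ j - 1))
                = a (p (j+1)) * R ^ (j+1) - a (p (j+1)) * R := by ring
            linarith
          linarith [h7, h8]
        linarith
    -- locate t in the partition
    set P : ℕ → Prop := fun j => p j ≤ t with hP
    have hP0 : P 0 := by rw [hP]; simp [hp0]; exact ht.1
    classical
    set i : ℕ := Nat.findGreatest P (m + 1) with hi
    have hpi : P i := Nat.findGreatest_spec (Nat.zero_le _) hP0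
    have hile : i ≤ m + 1 := Nat.findGreatest_le _
    have hti1 : t ≤ p (i + 1) := by
      by_cases hcase : i = m + 1
      · rw [hpT (i+1) (by omega)]; exact ht.2
      · have hng : ¬ P (i + 1) :=
          Nat.findGreatest_is_greatest (P := P) (n := m + 1) (k := i + 1)
            (by rw [← hi]; omega) (by omega)
        have : ¬ (p (i + 1) ≤ t) := by simpa [hP] using hng
        exact (not_le.mp this).le
    have hQtq : Q t - Q (p i) ≤ q := by
      have h1 : Q t ≤ Q (p (i+1)) := hQmono ht (hpmem (i+1)) hti1
      have := hpinc i
      linarith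
    have hWt : W t ≤ (a t + Y (p i)) / (1 - q) :=
      hpiece (p i) (hpmem i) t ht hpi hQtq t ⟨hpi, le_rfl⟩
    have hYi : Y (p i) ≤ a (p i) * (R ^ i - 1) := hYind i
    have hai : a (p i) ≤ a t := hamono (hpmem i) ht hpi
    have hRi1 : 1 ≤ R ^ i := one_le_pow₀ hR1
    have hat0 : 0 ≤ a t := ha0 t ht
    have hfin : W t ≤ a t * R ^ (i + 1) := by
      have hYi' : Y (p i) ≤ a t * (R ^ i - 1) := by nlinarith
      have hnum : a t + Y (p i) ≤ a t * R ^ i := by nlinarith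
      have h1 : W t ≤ (a t * R ^ i) / (1 - q) :=
        hWt.trans (by gcongr)
      calc W t ≤ (a t * R ^ i) / (1 - q) := h1
        _ = a t * R ^ (i + 1) := by
            rw [div_eq_mul_inv, ← hR]; ring
    have hpow : R ^ (i + 1) ≤ R ^ (m + 2) := pow_le_pow_right₀ hR1 (by omega)
    calc W t ≤ a t * R ^ (i + 1) := hfin
      _ ≤ a t * R ^ (m + 2) := by nlinarith
      _ = a t * ((1 - k / ↑m)⁻¹) ^ (m + 2) := by rw [hR, hqk]
  -- limit as m → ∞
  have hlim : Filter.Tendsto (fun m : ℕ => a t * ((1 - k / m)⁻¹) ^ (m + 2))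
      Filter.atTop (nhds (a t * Real.exp k)) := by
    have h1 : Filter.Tendsto (fun m : ℕ => (1 + (-k) / m) ^ m)
        Filter.atTop (nhds (Real.exp (-k))) := Real.tendsto_one_add_div_pow_exp (-k)
    have h2 : Filter.Tendsto (fun m : ℕ => (1 + (-k) / m))
        Filter.atTop (nhds 1) := by
      have := tendsto_const_div_atTop_nhds_zero_nat (-k)
      have h := this.const_add (1:ℝ)
      simpa using h
    have h3 : Filter.Tendsto (fun m : ℕ => (1 + (-k) / m) ^ (m + 2))
        Filter.atTop (nhds (Real.exp (-k))) := by
      have := (h1.mul (h2.mul h2))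
      simp only [pow_succ]
      convert this using 2 with m
      · ring
      · simp
    have h4 : Filter.Tendsto (fun m : ℕ => ((1 + (-k) / m) ^ (m + 2))⁻¹)
        Filter.atTop (nhds (Real.exp (-k))⁻¹) := h3.inv₀ (Real.exp_ne_zero _)
    rw [← Real.exp_neg, neg_neg] at h4
    have h5 := h4.const_mul (a t)
    convert h5 using 2 with m
    rw [← inv_pow]
    congr 2
    ring
  have hkint : (∫ τ in T₀..T, β τ) = k := by rw [hk, hQdef]
  rw [hkint]
  refine ge_of_tendsto hlim ?_
  filter_upwards [Filter.eventually_gt_atTop (⌈k⌉₊ + 1)] with m hm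
  apply perm m (by omega)
  calc k ≤ ⌈k⌉₊ := Nat.le_ceil k
    _ < m := by exact_mod_cast (by omega : ⌈k⌉₊ < m)
lemma sqrt_step (T₀ T : ℝ) (hT : T₀ ≤ T) (u g : ℝ → ℝ) {ε η : ℝ} (hε : 0 < ε) (hη : 0 < η)
    (hu : ContinuousOn u (Set.Icc T₀ T)) (huε : ∀ τ ∈ Set.Icc T₀ T, ε ≤ u τ)
    (hg0 : ∀ τ ∈ Set.Icc T₀ T, 0 ≤ g τ) (hgint : IntegrableOn g (Set.Icc T₀ T))
    (hkey : ∀ s ∈ Set.Icc T₀ T, ∀ t ∈ Set.Icc T₀ T, s ≤ t →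
      u t ^ 2 - u s ^ 2 ≤ ∫ τ in s..t, 2 * u τ * g τ) :
    ∀ t ∈ Set.Icc T₀ T, u t ≤ u T₀ + (1 + η) * ∫ τ in T₀..t, g τ := by
  have hT₀mem : T₀ ∈ Set.Icc T₀ T := ⟨le_rfl, hT⟩
  set Γ : ℝ → ℝ := fun s => ∫ τ in T₀..s, g τ with hΓdef
  have hΓT₀ : Γ T₀ = 0 := integral_same
  have hΓadd : ∀ s ∈ Set.Icc T₀ T, ∀ w ∈ Set.Icc T₀ T, s ≤ w →
      Γ w - Γ s = ∫ τ in s..w, g τ := by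
    intro s hs w hw hsw
    have := integral_add_adjacent_intervals (my_II hgint hT₀mem hs hs.1)
      (my_II hgint hs hw hsw)
    simp only [hΓdef]; linarith [this]
  have hΓmono : MonotoneOn Γ (Set.Icc T₀ T) := by
    intro s hs w hw hsw
    have h := hΓadd s hs w hw hsw
    have : (0:ℝ) ≤ ∫ τ in s..w, g τ :=
      integral_nonneg hsw (fun τ hτ => hg0 τ (Set.Icc_subset_Icc hs.1 hw.2 hτ))
    linarith
  have hΓcont : ContinuousOn Γ (Set.Icc T₀ T) := by
    have := continuousOn_primitive_interval
      (a := T₀) (b := T) (f := g) (μ := volume) (by rwa [Set.uIcc_of_le hT])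
    rwa [Set.uIcc_of_le hT] at this
  -- integrability of 2 u g
  obtain ⟨C, hC⟩ := isCompact_Icc.exists_bound_of_continuousOn hu
  have humeas : AEStronglyMeasurable u (volume.restrict (Set.Icc T₀ T)) :=
    hu.aestronglyMeasurable measurableSet_Icc
  have hugint : IntegrableOn (fun τ => 2 * u τ * g τ) (Set.Icc T₀ T) := by
    have h1 : IntegrableOn (fun τ => u τ * g τ) (Set.Icc T₀ T) :=
      Integrable.bdd_mul hgint humeas
        ((ae_restrict_iff' measurableSet_Icc).mpr (ae_of_all _ fun τ hτ => hC τ hτ))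
    have := h1.const_mul 2
    simpa [mul_assoc, IntegrableOn] using this
  -- piece bound
  have hB : ∀ s ∈ Set.Icc T₀ T, ∀ t ∈ Set.Icc T₀ T, s ≤ t →
      Γ t - Γ s ≤ 2 * ε * η → u t ≤ u s + (1 + η) * (Γ t - Γ s) := by
    intro s hs t ht hst hsmall
    obtain ⟨σ, hσ, hmax⟩ := isCompact_Icc.exists_isMaxOn ⟨s, le_rfl, hst⟩
      (hu.mono (Set.Icc_subset_Icc hs.1 ht.2))
    have hσI : σ ∈ Set.Icc T₀ T := Set.Icc_subset_Icc hs.1 ht.2 hσ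
    set M := u σ with hM
    have hus : ε ≤ u s := huε s hs
    have husM : u s ≤ M := hmax ⟨le_rfl, hst⟩
    have hutM : u t ≤ M := hmax ⟨hst, le_rfl⟩
    have hεM : ε ≤ M := hus.trans husM
    have h1 : M ^ 2 - u s ^ 2 ≤ ∫ τ in s..σ, 2 * u τ * g τ := hkey s hs σ hσI hσ.1
    have h2 : (∫ τ in s..σ, 2 * u τ * g τ) ≤ ∫ τ in s..σ, 2 * M * g τ := by
      apply integral_mono_on hσ.1 (my_II hugint hs hσI hσ.1)
        ((my_II hgint hs hσI hσ.1).const_mul _)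
      intro τ hτ
      have hτI : τ ∈ Set.Icc T₀ T := Set.Icc_subset_Icc hs.1 hσI.2 hτ
      have := hmax (Set.Icc_subset_Icc le_rfl hσ.2 hτ)
      have hgτ := hg0 τ hτI
      nlinarith [mul_le_mul_of_nonneg_right this hgτ]
    have h3 : (∫ τ in s..σ, 2 * M * g τ) = 2 * M * (Γ σ - Γ s) := by
      rw [intervalIntegral.integral_const_mul, hΓadd s hs σ hσI hσ.1]
    set G := Γ t - Γ s with hG
    have hG0 : 0 ≤ G := by
      have := hΓmono hs ht hst; simp only [hG]; linarith
    have hσG : Γ σ - Γ s ≤ G := by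
      have := hΓmono hσI ht hσ.2; simp only [hG]; linarith
    have hMq : M ^ 2 ≤ u s ^ 2 + 2 * M * G := by
      have h4 : 2 * M * (Γ σ - Γ s) ≤ 2 * M * G :=
        mul_le_mul_of_nonneg_left hσG (by linarith)
      linarith
    -- conclude M ≤ u s + (1+η) G
    have hMfin : M ≤ u s + (1 + η) * G := by
      by_contra hcon
      push_neg at hcon
      have e1 : (M - G) ^ 2 ≤ u s ^ 2 + G ^ 2 := by nlinarith
      have e2 : u s + η * G < M - G := by nlinarith
      have e3 : (u s + η * G) ^ 2 < (M - G) ^ 2 := by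
        apply pow_lt_pow_left₀ e2 (by nlinarith [mul_nonneg hη.le hG0])
        norm_num
      have e4 : G * G ≤ 2 * ε * η * G := mul_le_mul_of_nonneg_right hsmall hG0
      have e5 : 2 * ε * η * G ≤ 2 * u s * η * G := by
        have : ε * (η * G) ≤ u s * (η * G) :=
          mul_le_mul_of_nonneg_right hus (by positivity)
        nlinarith
      nlinarith [sq_nonneg (η * G)]
    linarith
  -- choose n
  have htot0 : 0 ≤ Γ T := by
    have := hΓmono hT₀mem ⟨hT, le_rfl⟩ hT; rw [hΓT₀] at this; exact this
  set n : ℕ := max 1 ⌈Γ T / (2 * ε * η)⌉₊ with hn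
  have hn1 : 0 < n := lt_of_lt_of_le one_pos (le_max_left _ _)
  have hnR : (0:ℝ) < n := by exact_mod_cast hn1
  have hsmalln : (Γ T - Γ T₀) / n ≤ 2 * ε * η := by
    rw [hΓT₀, sub_zero, div_le_iff₀ hnR]
    have h1 : Γ T / (2 * ε * η) ≤ (⌈Γ T / (2 * ε * η)⌉₊ : ℝ) := Nat.le_ceil _
    have h2 : ((⌈Γ T / (2 * ε * η)⌉₊ : ℕ) : ℝ) ≤ n := by
      exact_mod_cast Nat.cast_le.mpr (le_max_right _ _)
    have h3 : Γ T / (2 * ε * η) ≤ (n : ℝ) := h1.trans h2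
    rw [div_le_iff₀ (by positivity)] at h3
    linarith
  obtain ⟨p, hpmono, hp0, hpT, hpmem, hpinc⟩ :=
    exists_partition T₀ T hT Γ hΓcont hΓmono n hn1
  have hpinc' : ∀ j, Γ (p (j + 1)) - Γ (p j) ≤ 2 * ε * η :=
    fun j => (hpinc j).trans hsmalln
  -- induction along partition
  have hind : ∀ j, u (p j) ≤ u T₀ + (1 + η) * Γ (p j) := by
    intro j
    induction j with
    | zero => rw [hp0, hΓT₀]; simp
    | succ j ih =>
      have hle : p j ≤ p (j + 1) := hpmono (Nat.le_succ j)
      have := hB (p j) (hpmem j) (p (j+1)) (hpmem (j+1)) hle (hpinc' j)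
      linarith
  -- conclude
  intro t ht
  classical
  set P : ℕ → Prop := fun j => p j ≤ t with hP
  have hP0 : P 0 := by rw [hP]; simp only [hp0]; exact ht.1
  set i : ℕ := Nat.findGreatest P (n + 1) with hi
  have hpi : P i := Nat.findGreatest_spec (Nat.zero_le _) hP0
  have hile : i ≤ n + 1 := Nat.findGreatest_le _
  have hti1 : t ≤ p (i + 1) := by
    by_cases hcase : i = n + 1
    · rw [hpT (i+1) (by omega)]; exact ht.2
    · have hng : ¬ P (i + 1) :=
        Nat.findGreatest_is_greatest (P := P) (n := n + 1) (k := i + 1)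
          (by rw [← hi]; omega) (by omega)
      have : ¬ (p (i + 1) ≤ t) := by simpa [hP] using hng
      exact (not_le.mp this).le
  have hsmallt : Γ t - Γ (p i) ≤ 2 * ε * η := by
    have h1 : Γ t ≤ Γ (p (i+1)) := hΓmono ht (hpmem (i+1)) hti1
    have := hpinc' i
    linarith
  have h1 : u t ≤ u (p i) + (1 + η) * (Γ t - Γ (p i)) :=
    hB (p i) (hpmem i) t ht hpi hsmallt
  have h2 := hind i
  have h3 : Γ (p i) ≤ Γ t := hΓmono (hpmem i) ht hpi
  simp only [hΓdef] at h1 h2 ⊢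
  nlinarith
lemma cont_mul_int {f g : ℝ → ℝ} {a b : ℝ} (hf : ContinuousOn f (Set.Icc a b))
    (hg : IntegrableOn g (Set.Icc a b)) :
    IntegrableOn (fun τ => f τ * g τ) (Set.Icc a b) := by
  obtain ⟨C, hC⟩ := isCompact_Icc.exists_bound_of_continuousOn hf
  exact Integrable.bdd_mul hg (hf.aestronglyMeasurable measurableSet_Icc)
    ((ae_restrict_iff' measurableSet_Icc).mpr (ae_of_all _ fun τ hτ => hC τ hτ))
theorem stmt18 (T₀ T : ℝ) (hT : T₀ ≤ T) {H : Type*} [NormedAddCommGroup H]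
    [InnerProductSpace ℝ H] [CompleteSpace H]
    (x₁ x₂ : ℝ → H) (hx₁ : ContinuousOn x₁ (Set.Icc T₀ T))
    (hx₂ : ContinuousOn x₂ (Set.Icc T₀ T))
    (L₁ L₂ φ : ℝ → ℝ) (r : ℝ) (hr : 0 < r) (Z : ℝ → H)
    (hL₁0 : ∀ t, 0 ≤ L₁ t) (hL₂0 : ∀ t, 0 ≤ L₂ t) (hφ0 : ∀ t, 0 ≤ φ t)
    (hL₁int : IntegrableOn L₁ (Set.Icc T₀ T)) (hL₂int : IntegrableOn L₂ (Set.Icc T₀ T))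
    (hφint : IntegrableOn φ (Set.Icc T₀ T)) (hZint : IntegrableOn Z (Set.Icc T₀ T))
    (D2' : ℝ → ℝ) (hD2'int : IntegrableOn D2' (Set.Icc T₀ T))
    (hAC : ∀ s ∈ Set.Icc T₀ T, ∀ t ∈ Set.Icc T₀ T, s ≤ t →
      ‖x₁ t - x₂ t‖ ^ 2 - ‖x₁ s - x₂ s‖ ^ 2 = ∫ u in s..t, D2' u)
    (hineq : ∀ᵐ t ∂(volume.restrict (Set.Icc T₀ T)),
      D2' t ≤ 2 * (L₁ t + φ t / r) * ‖x₁ t - x₂ t‖ ^ 2 +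
        2 * ‖Z t‖ * ‖x₁ t - x₂ t‖ +
        2 * L₂ t * ‖x₁ t - x₂ t‖ * ∫ s in T₀..t, ‖x₁ s - x₂ s‖) :
    ∀ t ∈ Set.Icc T₀ T,
      ‖x₁ t - x₂ t‖ ≤
        exp (∫ τ in T₀..T, (max (L₁ τ + φ τ / r) (L₂ τ) + 1)) *
          (‖x₁ T₀ - x₂ T₀‖ + ∫ s in T₀..t, ‖Z s‖) := by
  have hT₀mem : T₀ ∈ Set.Icc T₀ T := ⟨le_rfl, hT⟩
  set D : ℝ → ℝ := fun τ => ‖x₁ τ - x₂ τ‖ with hDdef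
  set K : ℝ → ℝ := fun τ => max (L₁ τ + φ τ / r) (L₂ τ) with hKdef
  have hDcont : ContinuousOn D (Set.Icc T₀ T) := (hx₁.sub hx₂).norm
  have hD0 : ∀ τ, 0 ≤ D τ := fun τ => norm_nonneg _
  have hDint : IntegrableOn D (Set.Icc T₀ T) := hDcont.integrableOn_Icc
  have hK0 : ∀ τ, 0 ≤ K τ := fun τ => le_trans (hL₂0 τ) (le_max_right _ _)
  have hK1 : ∀ τ, L₁ τ + φ τ / r ≤ K τ := fun τ => le_max_left _ _
  have hK2 : ∀ τ, L₂ τ ≤ K τ := fun τ => le_max_right _ _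
  have hL₁φ : IntegrableOn (fun τ => L₁ τ + φ τ / r) (Set.Icc T₀ T) :=
    hL₁int.add (hφint.div_const r)
  have hKint : IntegrableOn K (Set.Icc T₀ T) := by
    have := hL₁φ.sup hL₂int
    exact this
  have hZnint : IntegrableOn (fun τ => ‖Z τ‖) (Set.Icc T₀ T) := hZint.norm
  set ζ : ℝ → ℝ := fun s => ∫ τ in T₀..s, ‖Z τ‖ with hζdef
  have hζmono : MonotoneOn ζ (Set.Icc T₀ T) := by
    intro s hs w hw hsw
    have h := integral_add_adjacent_intervals (my_II hZnint hT₀mem hs hs.1)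
      (my_II hZnint hs hw hsw)
    have h2 : (0:ℝ) ≤ ∫ τ in s..w, ‖Z τ‖ :=
      integral_nonneg hsw (fun τ _ => norm_nonneg _)
    simp only [hζdef]
    linarith [h]
  have hζ0 : ∀ s ∈ Set.Icc T₀ T, 0 ≤ ζ s := by
    intro s hs
    exact integral_nonneg hs.1 (fun τ _ => norm_nonneg _)
  set I : ℝ → ℝ := fun s => ∫ τ in T₀..s, D τ with hIdef
  have hIcont : ContinuousOn I (Set.Icc T₀ T) := by
    have := continuousOn_primitive_interval
      (a := T₀) (b := T) (f := D) (μ := volume) (by rwa [Set.uIcc_of_le hT])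
    rwa [Set.uIcc_of_le hT] at this
  set kbar : ℝ := ∫ τ in T₀..T, (K τ + 1) with hkbar
  -- main parametric bound
  have main : ∀ ε : ℝ, 0 < ε → ∀ η : ℝ, 0 < η → ∀ t ∈ Set.Icc T₀ T,
      D t ≤ (Real.sqrt (D T₀ ^ 2 + ε ^ 2) + (1 + η) * ζ t) *
        Real.exp ((1 + η) * kbar) := by
    intro ε hε η hη t ht
    set u : ℝ → ℝ := fun τ => Real.sqrt (D τ ^ 2 + ε ^ 2) with hudef
    have hucont : ContinuousOn u (Set.Icc T₀ T) :=
      Real.continuous_sqrt.comp_continuousOn ((hDcont.pow 2).add continuousOn_const)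
    have hu2 : ∀ τ, u τ ^ 2 = D τ ^ 2 + ε ^ 2 := fun τ =>
      Real.sq_sqrt (by positivity)
    have hu0 : ∀ τ, 0 ≤ u τ := fun τ => Real.sqrt_nonneg _
    have huD : ∀ τ, D τ ≤ u τ := by
      intro τ
      rw [hudef]
      have : D τ = Real.sqrt (D τ ^ 2) := (Real.sqrt_sq (hD0 τ)).symm
      rw [this]
      apply Real.sqrt_le_sqrt
      nlinarith [sq_nonneg ε, Real.sq_sqrt (sq_nonneg (D τ))]
    have huε : ∀ τ ∈ Set.Icc T₀ T, ε ≤ u τ := by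
      intro τ _
      rw [hudef]
      have : ε = Real.sqrt (ε ^ 2) := (Real.sqrt_sq hε.le).symm
      rw [this]
      apply Real.sqrt_le_sqrt
      nlinarith [sq_nonneg (D τ), Real.sq_sqrt (sq_nonneg ε)]
    have huint : IntegrableOn u (Set.Icc T₀ T) := hucont.integrableOn_Icc
    set J : ℝ → ℝ := fun s => ∫ τ in T₀..s, u τ with hJdef
    have hJcont : ContinuousOn J (Set.Icc T₀ T) := by
      have := continuousOn_primitive_interval
        (a := T₀) (b := T) (f := u) (μ := volume) (by rwa [Set.uIcc_of_le hT])
      rwa [Set.uIcc_of_le hT] at this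
    have hJ0 : ∀ τ ∈ Set.Icc T₀ T, 0 ≤ J τ := fun τ hτ =>
      integral_nonneg hτ.1 (fun x _ => hu0 x)
    have hIJ : ∀ τ ∈ Set.Icc T₀ T, I τ ≤ J τ := by
      intro τ hτ
      apply integral_mono_on hτ.1
        (my_II hDint hT₀mem hτ hτ.1) (my_II huint hT₀mem hτ hτ.1)
      exact fun x _ => huD x
    have hI0 : ∀ τ ∈ Set.Icc T₀ T, 0 ≤ I τ := fun τ hτ =>
      integral_nonneg hτ.1 (fun x _ => hD0 x)
    set g : ℝ → ℝ := fun τ => K τ * u τ + ‖Z τ‖ + K τ * J τ with hgdef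
    have hg0 : ∀ τ ∈ Set.Icc T₀ T, 0 ≤ g τ := by
      intro τ hτ
      have := mul_nonneg (hK0 τ) (hu0 τ)
      have := mul_nonneg (hK0 τ) (hJ0 τ hτ)
      have := norm_nonneg (Z τ)
      simp only [hgdef]; positivity
    have hgint : IntegrableOn g (Set.Icc T₀ T) := by
      have h1 : IntegrableOn (fun τ => u τ * K τ) (Set.Icc T₀ T) :=
        cont_mul_int hucont hKint
      have h2 : IntegrableOn (fun τ => J τ * K τ) (Set.Icc T₀ T) :=
        cont_mul_int hJcont hKint
      have := (h1.add hZnint).add h2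
      apply IntegrableOn.congr_fun this _ measurableSet_Icc
      intro τ _; simp only [Pi.add_apply, hgdef]; ring
    -- the key quadratic integral inequality
    have hkey : ∀ s ∈ Set.Icc T₀ T, ∀ w ∈ Set.Icc T₀ T, s ≤ w →
        u w ^ 2 - u s ^ 2 ≤ ∫ τ in s..w, 2 * u τ * g τ := by
      intro s hs w hw hsw
      have e1 : u w ^ 2 - u s ^ 2 = D w ^ 2 - D s ^ 2 := by
        rw [hu2, hu2]; ring
      rw [e1, hAC s hs w hw hsw]
      -- RHS of hineq
      set Rb : ℝ → ℝ := fun τ => 2 * (L₁ τ + φ τ / r) * D τ ^ 2 +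
        2 * ‖Z τ‖ * D τ + 2 * L₂ τ * D τ * I τ with hRbdef
      have hRbint : IntegrableOn Rb (Set.Icc T₀ T) := by
        have h1 : IntegrableOn (fun τ => (2 * D τ ^ 2) * (L₁ τ + φ τ / r))
            (Set.Icc T₀ T) :=
          cont_mul_int (((hDcont.pow 2).const_smul 2).congr (fun x _ => by
            simp [smul_eq_mul])) hL₁φ
        have h2 : IntegrableOn (fun τ => (2 * D τ) * ‖Z τ‖) (Set.Icc T₀ T) :=
          cont_mul_int ((hDcont.const_smul 2).congr (fun x _ => by
            simp [smul_eq_mul])) hZnint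
        have h3 : IntegrableOn (fun τ => (2 * D τ * I τ) * L₂ τ) (Set.Icc T₀ T) :=
          cont_mul_int (((hDcont.const_smul 2).congr (fun x _ => by
            simp [smul_eq_mul])).mul hIcont) hL₂int
        have := (h1.add h2).add h3
        apply IntegrableOn.congr_fun this _ measurableSet_Icc
        intro τ _; simp only [Pi.add_apply, hRbdef]; ring
      have hugint : IntegrableOn (fun τ => 2 * u τ * g τ) (Set.Icc T₀ T) :=
        cont_mul_int ((hucont.const_smul 2).congr (fun x _ => by
          simp [smul_eq_mul])) hgint
      have step1 : (∫ τ in s..w, D2' τ) ≤ ∫ τ in s..w, Rb τ := by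
        apply integral_mono_ae_restrict hsw
          (my_II hD2'int hs hw hsw) (my_II hRbint hs hw hsw)
        have hsub : Set.Icc s w ⊆ Set.Icc T₀ T := Set.Icc_subset_Icc hs.1 hw.2
        exact ae_restrict_of_ae_restrict_of_subset hsub hineq
      have step2 : (∫ τ in s..w, Rb τ) ≤ ∫ τ in s..w, 2 * u τ * g τ := by
        apply integral_mono_on hsw (my_II hRbint hs hw hsw)
          (my_II hugint hs hw hsw)
        intro τ hτ
        have hτI : τ ∈ Set.Icc T₀ T := Set.Icc_subset_Icc hs.1 hw.2 hτ
        have c0 : D τ ^ 2 ≤ u τ ^ 2 := by rw [hu2]; nlinarith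
        have c1 : (L₁ τ + φ τ / r) * D τ ^ 2 ≤ K τ * u τ ^ 2 :=
          mul_le_mul (hK1 τ) c0 (sq_nonneg _) (hK0 τ)
        have c2 : ‖Z τ‖ * D τ ≤ ‖Z τ‖ * u τ :=
          mul_le_mul_of_nonneg_left (huD τ) (norm_nonneg _)
        have c3 : L₂ τ * (D τ * I τ) ≤ K τ * (u τ * J τ) :=
          mul_le_mul (hK2 τ)
            (mul_le_mul (huD τ) (hIJ τ hτI) (hI0 τ hτI) (hu0 τ))
            (mul_nonneg (hD0 τ) (hI0 τ hτI)) (hK0 τ)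
        simp only [hRbdef, hgdef]
        nlinarith [c1, c2, c3]
      linarith
    -- linear inequality from sqrt_step
    have hLIN := sqrt_step T₀ T hT u g hε hη hucont huε hg0 hgint hkey
    -- Gronwall setup
    set W : ℝ → ℝ := fun τ => u τ + J τ with hWdef
    set aa : ℝ → ℝ := fun τ => u T₀ + (1 + η) * ζ τ with haadef
    set β : ℝ → ℝ := fun τ => (1 + η) * (K τ + 1) with hβdef
    have hWcont : ContinuousOn W (Set.Icc T₀ T) := hucont.add hJcont
    have hW0 : ∀ τ ∈ Set.Icc T₀ T, 0 ≤ W τ := fun τ hτ =>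
      add_nonneg (hu0 τ) (hJ0 τ hτ)
    have haa0 : ∀ τ ∈ Set.Icc T₀ T, 0 ≤ aa τ := by
      intro τ hτ
      have h1 := huε T₀ hT₀mem
      have h2 := hζ0 τ hτ
      simp only [haadef]
      nlinarith
    have haamono : MonotoneOn aa (Set.Icc T₀ T) := by
      intro s hs w hw hsw
      have := hζmono hs hw hsw
      simp only [haadef]
      nlinarith
    have hβ0 : ∀ τ, 0 ≤ β τ := by
      intro τ
      have := hK0 τ
      simp only [hβdef]
      nlinarith
    have hβint : IntegrableOn β (Set.Icc T₀ T) := by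
      have : IntegrableOn (fun τ => K τ + 1) (Set.Icc T₀ T) :=
        hKint.add (integrableOn_const measure_Icc_lt_top.ne)
      simpa [hβdef, IntegrableOn] using this.const_mul (1 + η)
    have hβWint : IntegrableOn (fun τ => β τ * W τ) (Set.Icc T₀ T) := by
      have h1 : IntegrableOn (fun τ => W τ * β τ) (Set.Icc T₀ T) :=
        cont_mul_int hWcont hβint
      apply IntegrableOn.congr_fun h1 _ measurableSet_Icc
      intro τ _; simp only [Pi.add_apply]; ring
    have hmain : ∀ w ∈ Set.Icc T₀ T, W w ≤ aa w + ∫ τ in T₀..w, β τ * W τ := by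
      intro w hw
      have h1 := hLIN w hw
      -- combine integrals pointwise
      have h2 : (1 + η) * (∫ τ in T₀..w, g τ) + (∫ τ in T₀..w, u τ) =
          ∫ τ in T₀..w, ((1 + η) * g τ + u τ) := by
        rw [integral_add ((my_II hgint hT₀mem hw hw.1).const_mul _)
          (my_II huint hT₀mem hw hw.1), intervalIntegral.integral_const_mul]
      have h3 : (∫ τ in T₀..w, ((1 + η) * g τ + u τ)) ≤
          ∫ τ in T₀..w, ((1 + η) * ‖Z τ‖ + β τ * W τ) := by
        apply integral_mono_on hw.1
          (((my_II hgint hT₀mem hw hw.1).const_mul _).add (my_II huint hT₀mem hw hw.1))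
          (((my_II hZnint hT₀mem hw hw.1).const_mul _).add (my_II hβWint hT₀mem hw hw.1))
        intro τ hτ
        have hτI : τ ∈ Set.Icc T₀ T := Set.Icc_subset_Icc le_rfl hw.2 hτ
        have e1 : 0 ≤ J τ := hJ0 τ hτI
        have e2 := hu0 τ
        have e3 := hK0 τ
        simp only [hgdef, hβdef, hWdef]
        nlinarith
      have h4 : (∫ τ in T₀..w, ((1 + η) * ‖Z τ‖ + β τ * W τ)) =
          (1 + η) * ζ w + ∫ τ in T₀..w, β τ * W τ := by
        rw [integral_add ((my_II hZnint hT₀mem hw hw.1).const_mul _)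
          (my_II hβWint hT₀mem hw hw.1), intervalIntegral.integral_const_mul]
      have h5 : J w ≤ ∫ τ in T₀..w, u τ := le_of_eq rfl
      simp only [hWdef, haadef]
      have hfin : u w + J w ≤ u T₀ + (1 + η) * (∫ τ in T₀..w, g τ) + J w := by
        linarith
      calc u w + J w ≤ u T₀ + (1 + η) * (∫ τ in T₀..w, g τ) + (∫ τ in T₀..w, u τ) := by
            simp only [hJdef] at hfin ⊢; linarith
        _ = u T₀ + ((1 + η) * (∫ τ in T₀..w, g τ) + (∫ τ in T₀..w, u τ)) := by ring
        _ = u T₀ + (∫ τ in T₀..w, ((1 + η) * g τ + u τ)) := by rw [h2]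
        _ ≤ u T₀ + (∫ τ in T₀..w, ((1 + η) * ‖Z τ‖ + β τ * W τ)) := by linarith
        _ = u T₀ + ((1 + η) * ζ w + ∫ τ in T₀..w, β τ * W τ) := by rw [h4]
        _ = u T₀ + (1 + η) * ζ w + ∫ τ in T₀..w, β τ * W τ := by ring
    have hG := gronwall_int T₀ T hT W aa β hWcont hW0 haa0 haamono hβ0 hβint hmain t ht
    have hβint_eq : (∫ τ in T₀..T, β τ) = (1 + η) * kbar := by
      simp only [hβdef, hkbar]
      rw [intervalIntegral.integral_const_mul]
    rw [hβint_eq] at hG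
    have hDu : D t ≤ u t := huD t
    have hJt : 0 ≤ J t := hJ0 t ht
    have hWt : u t ≤ W t := by simp only [hWdef]; linarith
    calc D t ≤ W t := le_trans hDu hWt
      _ ≤ aa t * Real.exp ((1 + η) * kbar) := hG
      _ = (Real.sqrt (D T₀ ^ 2 + ε ^ 2) + (1 + η) * ζ t) * Real.exp ((1 + η) * kbar) := by
          simp only [haadef, hudef]
  -- take limits
  intro t ht
  have hseq : ∀ m : ℕ, D t ≤ (Real.sqrt (D T₀ ^ 2 + (1 / (m + 1) : ℝ) ^ 2) +
      (1 + (1 / (m + 1) : ℝ)) * ζ t) * Real.exp ((1 + (1 / (m + 1) : ℝ)) * kbar) := by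
    intro m
    apply main _ (by positivity) _ (by positivity) t ht
  set F : ℝ → ℝ := fun θ => (Real.sqrt (D T₀ ^ 2 + θ ^ 2) + (1 + θ) * ζ t) *
    Real.exp ((1 + θ) * kbar) with hF
  have hFcont : Continuous F := by
    apply Continuous.mul
    · apply Continuous.add
      · exact Real.continuous_sqrt.comp (by continuity)
      · continuity
    · exact Real.continuous_exp.comp (by continuity)
  have h0 : Filter.Tendsto (fun m : ℕ => (1 / (m + 1) : ℝ)) Filter.atTop (nhds 0) :=
    tendsto_one_div_add_atTop_nhds_zero_nat
  have hlim : Filter.Tendsto (fun m : ℕ => F (1 / (m + 1) : ℝ)) Filter.atTop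
      (nhds (F 0)) := (hFcont.tendsto 0).comp h0
  have hF0 : F 0 = (D T₀ + ζ t) * Real.exp kbar := by
    simp only [hF]
    rw [show (0:ℝ) ^ 2 = 0 by norm_num, add_zero, Real.sqrt_sq (hD0 T₀)]
    ring_nf
  have hle : D t ≤ F 0 := by
    apply ge_of_tendsto hlim
    filter_upwards with m
    exact hseq m
  rw [hF0] at hle
  calc D t ≤ (D T₀ + ζ t) * Real.exp kbar := hle
    _ = Real.exp kbar * (D T₀ + ζ t) := by ring
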